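/- Let π be an orthogonal representation of G on a real Hilbert space H. The set Z¹(G,π) of 1-cocycles b : G → H is a real vector space that is complete with respect to the Hilbert norm ‖b‖_{L²(μ)} := (∫_G ‖b(x)‖² dμ(x))^{1/2}, and this norm is equivalent to the norm ‖b‖_Q := sup_{g ∈ Q} ‖b(g)‖: there exist constants 0 < c₁ ≤ c₂ (depending only on G, Q, μ, π) such that c₁ ‖b‖_Q ≤ ‖b‖_{L²(μ)} ≤ c₂ ‖b‖_Q for every 1-cocycle b. -/

import Mathlib

open MeasureTheory Filter Topology
open scoped RealInnerProductSpace ENNReal Pointwise Classical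

set_option linter.unusedSectionVars false
set_option maxHeartbeats 1000000

noncomputable section

variable {G : Type*} [Group G] [TopologicalSpace G] [IsTopologicalGroup G]
  [LocallyCompactSpace G] [MeasurableSpace G] [BorelSpace G]

/-- The word length `|x|_G` associated to the generating set `Q`. -/
noncomputable def wordLength (Q : Set G) (x : G) : ℕ :=
  if x = 1 then 0 else sInf {n : ℕ | 1 ≤ n ∧ x ∈ Q ^ n}

/-- Convolution of two measures on `G`. -/
noncomputable def mconv (μ ν : MeasureTheory.Measure G) : MeasureTheory.Measure G :=
  (μ.prod ν).map fun p => p.1 * p.2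

/-- The `n`-fold convolution power `μ^{*n}`. -/
noncomputable def convPow (μ : MeasureTheory.Measure G) : ℕ → MeasureTheory.Measure G
  | 0 => MeasureTheory.Measure.dirac 1
  | n + 1 => mconv (convPow μ n) μ

/-- The standing assumptions ("Convention") on `G`, `Q`, the Haar measure `m`
and the probability measure `μ`. -/
structure Convention (Q : Set G) (m μ : MeasureTheory.Measure G) : Prop where
  relCompact : IsCompact (closure Q)
  qsymm : Q⁻¹ = Q
  genNbhd : ∃ U : Set G, IsOpen U ∧ (1 : G) ∈ U ∧ U ⊆ Q ∧ Subgroup.closure U = ⊤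
  haar : m.IsHaarMeasure
  prob : IsProbabilityMeasure μ
  msymm : μ.map (fun x => x⁻¹) = μ
  ac : μ.AbsolutelyContinuous m
  lowerBound : ∃ ε : ℝ≥0∞, 0 < ε ∧ ∀ x ∈ Q, ε ≤ μ.rnDeriv m x
  moments : ∀ d : ℕ, ∫⁻ x, (wordLength Q x : ℝ≥0∞) ^ d ∂μ < ⊤

variable {H : Type*} [NormedAddCommGroup H] [InnerProductSpace ℝ H]

/-- `b : G → H` is a continuous `1`-cocycle for the orthogonal representation `π`. -/
def IsCocycle (π : G →* (H ≃ₗᵢ[ℝ] H)) (b : G → H) : Prop :=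
  Continuous b ∧ ∀ g x : G, b (g * x) = b g + π g (b x)

/-- `b` is a `1`-coboundary. -/
def IsCoboundary (π : G →* (H ≃ₗᵢ[ℝ] H)) (b : G → H) : Prop :=
  ∃ v : H, ∀ x : G, b x = v - π x v

/-- The subspace `K` is invariant under the representation `π`. -/
def IsInvariantSub (π : G →* (H ≃ₗᵢ[ℝ] H)) (K : Submodule ℝ H) : Prop :=
  ∀ g : G, ∀ v ∈ K, π g v ∈ K

/-- `P` is the orthogonal projection of `H` onto `K`. -/
def IsOrthProj (K : Submodule ℝ H) (P : H →ₗ[ℝ] H) : Prop :=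
  ∀ v : H, P v ∈ K ∧ v - P v ∈ Kᗮ


namespace Stmt4Aux


variable {π : G →* (H ≃ₗᵢ[ℝ] H)} {b : G → H}

lemma cocycle_one (hb : IsCocycle π b) : b 1 = 0 := by
  have h := hb.2 1 1
  simp only [one_mul, map_one, LinearIsometryEquiv.coe_one, id_eq] at h
  exact (left_eq_add.mp h)

lemma cocycle_norm_mul (hb : IsCocycle π b) (g x : G) :
    ‖b (g * x)‖ ≤ ‖b g‖ + ‖b x‖ := by
  rw [hb.2 g x]
  refine (norm_add_le _ _).trans ?_
  gcongr
  exact le_of_eq ((π g).norm_map (b x))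

lemma cocycle_pow_bound (hb : IsCocycle π b) (S : Set G) (B : ℝ)
    (hS : ∀ v ∈ S, ‖b v‖ ≤ B) : ∀ n : ℕ, ∀ g ∈ S ^ n, ‖b g‖ ≤ (n : ℝ) * B := by
  intro n
  induction n with
  | zero => intro g hg
            simp only [pow_zero, Set.mem_one] at hg
            simp [hg, cocycle_one hb]
  | succ n ih =>
      intro g hg
      rw [pow_succ] at hg
      obtain ⟨y, hy, v, hv, rfl⟩ := Set.mem_mul.mp hg
      calc ‖b (y * v)‖ ≤ ‖b y‖ + ‖b v‖ := cocycle_norm_mul hb y v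
        _ ≤ n * B + B := add_le_add (ih y hy) (hS v hv)
        _ = ((n + 1 : ℕ) : ℝ) * B := by push_cast; ring

lemma cocycle_add {b₁ b₂ : G → H} (h₁ : IsCocycle π b₁) (h₂ : IsCocycle π b₂) :
    IsCocycle π (fun g => b₁ g + b₂ g) :=
  ⟨h₁.1.add h₂.1, fun g x => by simp only [h₁.2 g x, h₂.2 g x, map_add]; abel⟩

lemma cocycle_smul (r : ℝ) (h : IsCocycle π b) :
    IsCocycle π (fun g => r • b g) :=
  ⟨h.1.const_smul r, fun g x => by
    simp only [h.2 g x, smul_add, LinearIsometryEquiv.map_smul]⟩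

lemma cocycle_sub {b₁ b₂ : G → H} (h₁ : IsCocycle π b₁) (h₂ : IsCocycle π b₂) :
    IsCocycle π (fun g => b₁ g - b₂ g) :=
  ⟨h₁.1.sub h₂.1, fun g x => by simp only [h₁.2 g x, h₂.2 g x, map_sub]; abel⟩

lemma symm_pow_inv {V : Set G} (hVs : V⁻¹ = V) (n : ℕ) : (V ^ n)⁻¹ = V ^ n := by
  rw [← inv_pow, hVs]

lemma gen_cover {U V : Set G} (hUV : U ⊆ V) (hV1 : (1 : G) ∈ V) (hVs : V⁻¹ = V)
    (hgen : Subgroup.closure U = ⊤) (x : G) : ∃ n : ℕ, x ∈ V ^ (n + 1) := by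
  have hx : x ∈ Subgroup.closure U := hgen ▸ Subgroup.mem_top x
  induction hx using Subgroup.closure_induction with
  | mem v hv => exact ⟨0, by simpa [pow_one] using hUV hv⟩
  | one => exact ⟨0, by simpa [pow_one] using hV1⟩
  | mul x y hx hy ihx ihy =>
      obtain ⟨n, hn⟩ := ihx; obtain ⟨m, hm⟩ := ihy
      refine ⟨n + m + 1, ?_⟩
      have : x * y ∈ V ^ (n + 1) * V ^ (m + 1) := Set.mul_mem_mul hn hm
      rwa [← pow_add, show n + 1 + (m + 1) = n + m + 1 + 1 by ring] at this
  | inv x hx ihx =>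
      obtain ⟨n, hn⟩ := ihx
      exact ⟨n, by rw [← symm_pow_inv hVs (n+1)]; exact Set.inv_mem_inv.mpr hn⟩

lemma pow_open {V : Set G} (hVo : IsOpen V) (n : ℕ) : IsOpen (V ^ (n + 1)) := by
  induction n with
  | zero => simpa [pow_one] using hVo
  | succ n ih => rw [pow_succ]; exact hVo.mul_left

lemma compact_subset_pow {V : Set G} (hVo : IsOpen V) (hV1 : (1 : G) ∈ V)
    (hcov : ∀ x : G, ∃ n : ℕ, x ∈ V ^ (n + 1)) {K : Set G} (hK : IsCompact K) :
    ∃ N : ℕ, K ⊆ V ^ (N + 1) := by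
  obtain ⟨t, ht⟩ := hK.elim_finite_subcover (fun n : ℕ => V ^ (n + 1))
    (fun n => pow_open hVo n) (fun x _ => Set.mem_iUnion.mpr (hcov x))
  refine ⟨t.sup id, fun x hx => ?_⟩
  obtain ⟨n, hn, hxn⟩ := Set.mem_iUnion₂.mp (ht hx)
  exact Set.pow_subset_pow_right hV1 (by
    have := Finset.le_sup (f := id) hn; simp only [id] at this; omega) hxn

lemma closure_subset_sq {V : Set G} (hVo : IsOpen V) (hV1 : (1 : G) ∈ V) (hVs : V⁻¹ = V) :
    closure V ⊆ V * V := by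
  intro h hh
  have hnbhd : h • V ∈ 𝓝 h := by
    have : IsOpen (h • V) := hVo.smul h
    exact this.mem_nhds ⟨1, hV1, by simp⟩
  obtain ⟨v₁, hv₁V, hv₁⟩ := mem_closure_iff_nhds.mp hh _ hnbhd
  obtain ⟨v₂, hv₂, hv₁eq⟩ := hv₁V
  refine ⟨v₁, hv₁, v₂⁻¹, by rw [← hVs]; exact Set.inv_mem_inv.mpr hv₂, ?_⟩
  simp only [smul_eq_mul] at hv₁eq
  rw [← hv₁eq]; group

lemma smul_set_measurable {A : Set G} (hA : MeasurableSet A) (g : G) :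
    MeasurableSet (g • A) := by
  have : g • A = (fun x => g⁻¹ * x) ⁻¹' A := by
    ext x; simp [Set.mem_smul_set_iff_inv_smul_mem]
  rw [this]
  exact (measurable_const_mul g⁻¹) hA

lemma lintegral_translate {m : Measure G} [m.IsMulLeftInvariant] {A : Set G}
    (hA : MeasurableSet A) {h : G → ℝ≥0∞} (hh : Measurable h) (g : G) :
    ∫⁻ x in A, h (g * x) ∂m = ∫⁻ y in g • A, h y ∂m := by
  have hgA : MeasurableSet (g • A) := smul_set_measurable hA g
  have e1 : ∀ x, A.indicator (fun x => h (g * x)) x = ((g • A).indicator h) (g * x) := by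
    intro x
    by_cases hx : x ∈ A
    · rw [Set.indicator_of_mem hx, Set.indicator_of_mem (by
        simpa [smul_eq_mul] using Set.smul_mem_smul_set (a := g) hx)]
    · rw [Set.indicator_of_notMem hx, Set.indicator_of_notMem (by
        intro hc
        obtain ⟨y, hy, hyx⟩ := hc
        simp only [smul_eq_mul] at hyx
        exact hx (by rwa [show y = x from mul_left_cancel hyx] at hy))]
  rw [← lintegral_indicator hA, ← lintegral_indicator hgA]
  calc ∫⁻ x, A.indicator (fun x => h (g * x)) x ∂m
      = ∫⁻ x, ((g • A).indicator h) (g * x) ∂m := by simp only [e1]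
    _ = ∫⁻ x, ((g • A).indicator h) x ∂m :=
        lintegral_mul_left_eq_self ((g • A).indicator h) g

lemma setLIntegral_le_of_rnDeriv {m μ : Measure G} [SigmaFinite m] [IsFiniteMeasure μ]
    (hac : μ.AbsolutelyContinuous m) {Q B : Set G} (hB : MeasurableSet B) (hBQ : B ⊆ Q)
    {ε : ℝ≥0∞} (hε0 : ε ≠ 0) (hεtop : ε ≠ ⊤) (hεle : ∀ x ∈ Q, ε ≤ μ.rnDeriv m x)
    {h : G → ℝ≥0∞} (hh : Measurable h) :
    ∫⁻ x in B, h x ∂m ≤ ε⁻¹ * ∫⁻ x, h x ∂μ := by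
  have key : ε * ∫⁻ x in B, h x ∂m ≤ ∫⁻ x in B, h x ∂μ := by
    conv_rhs => rw [← Measure.withDensity_rnDeriv_eq μ m hac]
    rw [restrict_withDensity hB,
      lintegral_withDensity_eq_lintegral_mul _ (Measure.measurable_rnDeriv μ m) hh,
      ← lintegral_const_mul' _ _ hεtop]
    refine lintegral_mono_ae ?_
    filter_upwards [ae_restrict_mem hB] with x hx
    exact mul_le_mul_left (hεle x (hBQ hx)) _
  calc ∫⁻ x in B, h x ∂m = ε⁻¹ * (ε * ∫⁻ x in B, h x ∂m) := by
        rw [← mul_assoc, ENNReal.inv_mul_cancel hε0 hεtop, one_mul]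
    _ ≤ ε⁻¹ * ∫⁻ x in B, h x ∂μ := mul_le_mul_right key _
    _ ≤ ε⁻¹ * ∫⁻ x, h x ∂μ := mul_le_mul_right (setLIntegral_le_lintegral _ _) _

lemma bddAbove_sup {Q : Set G} (hQc : IsCompact (closure Q)) (hb : Continuous b) :
    BddAbove (Set.range fun g : Q => ‖b (g : G)‖) := by
  have h1 : BddAbove ((fun x => ‖b x‖) '' closure Q) := (hQc.image hb.norm).bddAbove
  refine BddAbove.mono ?_ h1
  rintro r ⟨g, rfl⟩
  exact ⟨(g : G), subset_closure g.2, rfl⟩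

lemma norm_le_sup {Q : Set G} (hQc : IsCompact (closure Q)) (hb : IsCocycle π b)
    {g : G} (hg : g ∈ Q) : ‖b g‖ ≤ ⨆ g : Q, ‖b (g : G)‖ :=
  le_ciSup (bddAbove_sup hQc hb.1) (⟨g, hg⟩ : Q)

lemma sup_nonneg {Q : Set G} (hQc : IsCompact (closure Q)) (h1Q : (1 : G) ∈ Q)
    (hb : IsCocycle π b) : 0 ≤ ⨆ g : Q, ‖b (g : G)‖ := by
  have := norm_le_sup hQc hb h1Q
  rwa [cocycle_one hb, norm_zero] at this

lemma norm_le_wl {Q : Set G} (hQc : IsCompact (closure Q))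
    (hcovQ : ∀ x : G, ∃ n : ℕ, x ∈ Q ^ (n + 1)) (hb : IsCocycle π b) (x : G) :
    ‖b x‖ ≤ (wordLength Q x : ℝ) * ⨆ g : Q, ‖b (g : G)‖ := by
  by_cases hx : x = 1
  · simp [hx, wordLength, cocycle_one hb]
  · have hne : {n : ℕ | 1 ≤ n ∧ x ∈ Q ^ n}.Nonempty := by
      obtain ⟨n, hn⟩ := hcovQ x
      exact ⟨n + 1, Nat.le_add_left 1 n, hn⟩
    have hwl : wordLength Q x = sInf {n : ℕ | 1 ≤ n ∧ x ∈ Q ^ n} := if_neg hx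
    have hmem := Nat.sInf_mem hne
    rw [← hwl] at hmem
    exact cocycle_pow_bound hb Q _ (fun v hv => norm_le_sup hQc hb hv)
      (wordLength Q x) x hmem.2

lemma lintegral_sq_le {Q : Set G} {μ : Measure G} (hQc : IsCompact (closure Q))
    (hcovQ : ∀ x : G, ∃ n : ℕ, x ∈ Q ^ (n + 1)) (hb : IsCocycle π b) :
    ∫⁻ x, ENNReal.ofReal (‖b x‖ ^ 2) ∂μ ≤
      ENNReal.ofReal ((⨆ g : Q, ‖b (g : G)‖) ^ 2) *
        ∫⁻ x, (wordLength Q x : ℝ≥0∞) ^ 2 ∂μ := by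
  set Bb := ⨆ g : Q, ‖b (g : G)‖ with hBb
  calc ∫⁻ x, ENNReal.ofReal (‖b x‖ ^ 2) ∂μ
      ≤ ∫⁻ x, ENNReal.ofReal (Bb ^ 2) * (wordLength Q x : ℝ≥0∞) ^ 2 ∂μ := by
        refine lintegral_mono fun x => ?_
        have h1 : ‖b x‖ ≤ (wordLength Q x : ℝ) * Bb := norm_le_wl hQc hcovQ hb x
        have h2 : ‖b x‖ ^ 2 ≤ ((wordLength Q x : ℝ) * Bb) ^ 2 :=
          pow_le_pow_left₀ (norm_nonneg _) h1 2
        calc ENNReal.ofReal (‖b x‖ ^ 2)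
            ≤ ENNReal.ofReal (Bb ^ 2 * (wordLength Q x : ℝ) ^ 2) :=
              ENNReal.ofReal_le_ofReal (by nlinarith)
          _ = ENNReal.ofReal (Bb ^ 2) * (wordLength Q x : ℝ≥0∞) ^ 2 := by
              rw [ENNReal.ofReal_mul (sq_nonneg Bb)]
              congr 1
              rw [ENNReal.ofReal_pow (Nat.cast_nonneg _), ENNReal.ofReal_natCast]
    _ = ENNReal.ofReal (Bb ^ 2) * ∫⁻ x, (wordLength Q x : ℝ≥0∞) ^ 2 ∂μ :=
        lintegral_const_mul' _ _ ENNReal.ofReal_ne_top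

lemma cocycle_point_bound {Q : Set G} {m μ : Measure G}
    [m.IsMulLeftInvariant] [m.IsOpenPosMeasure] [SigmaFinite m] [IsFiniteMeasure μ]
    (hac : μ.AbsolutelyContinuous m)
    {ε : ℝ≥0∞} (hε0 : ε ≠ 0) (hεtop : ε ≠ ⊤) (hεle : ∀ x ∈ Q, ε ≤ μ.rnDeriv m x)
    {A : Set G} (hAo : IsOpen A) (hAne : A.Nonempty) (hAQ : A ⊆ Q) (hAfin : m A ≠ ⊤)
    {g : G} (hgA : g • A ⊆ Q) (hb : IsCocycle π b) :
    ENNReal.ofReal (‖b g‖ ^ 2) ≤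
      ((m A)⁻¹ * (4 * ε⁻¹)) * ∫⁻ x, ENNReal.ofReal (‖b x‖ ^ 2) ∂μ := by
  set F : G → ℝ≥0∞ := fun x => ENNReal.ofReal (‖b x‖ ^ 2) with hF
  have hFc : Continuous F := ENNReal.continuous_ofReal.comp (hb.1.norm.pow 2)
  have hFm : Measurable F := hFc.measurable
  have hFgm : Measurable fun x => F (g * x) := hFm.comp (measurable_const_mul g)
  have hAm : MeasurableSet A := hAo.measurableSet
  have hmA0 : m A ≠ 0 := (hAo.measure_pos m hAne).ne'
  set J := ∫⁻ x, F x ∂μ with hJ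
  have hpt : ∀ x ∈ A, ENNReal.ofReal (‖b g‖ ^ 2) ≤ 2 * F (g * x) + 2 * F x := by
    intro x hx
    have hineq : ‖b g‖ ≤ ‖b (g * x)‖ + ‖b x‖ := by
      have h2 := hb.2 g x
      have h3 : b g = b (g * x) - π g (b x) := by rw [h2]; abel
      calc ‖b g‖ = ‖b (g * x) - π g (b x)‖ := by rw [← h3]
        _ ≤ ‖b (g * x)‖ + ‖π g (b x)‖ := norm_sub_le _ _
        _ = ‖b (g * x)‖ + ‖b x‖ := by rw [(π g).norm_map]
    have hsq : ‖b g‖ ^ 2 ≤ 2 * ‖b (g * x)‖ ^ 2 + 2 * ‖b x‖ ^ 2 := by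
      nlinarith [pow_le_pow_left₀ (norm_nonneg (b g)) hineq 2,
        sq_nonneg (‖b (g * x)‖ - ‖b x‖)]
    calc ENNReal.ofReal (‖b g‖ ^ 2)
        ≤ ENNReal.ofReal (2 * ‖b (g * x)‖ ^ 2 + 2 * ‖b x‖ ^ 2) :=
          ENNReal.ofReal_le_ofReal hsq
      _ = 2 * F (g * x) + 2 * F x := by
          rw [ENNReal.ofReal_add (by positivity) (by positivity),
            ENNReal.ofReal_mul (by norm_num), ENNReal.ofReal_mul (by norm_num),
            ENNReal.ofReal_ofNat]
  have key : m A * ENNReal.ofReal (‖b g‖ ^ 2) ≤ 4 * ε⁻¹ * J := by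
    have t1 : ∫⁻ x in A, F (g * x) ∂m ≤ ε⁻¹ * J := by
      rw [lintegral_translate hAm hFm g]
      exact setLIntegral_le_of_rnDeriv hac (smul_set_measurable hAm g) hgA
        hε0 hεtop hεle hFm
    have t2 : ∫⁻ x in A, F x ∂m ≤ ε⁻¹ * J :=
      setLIntegral_le_of_rnDeriv hac hAm hAQ hε0 hεtop hεle hFm
    calc m A * ENNReal.ofReal (‖b g‖ ^ 2)
        = ∫⁻ _ in A, ENNReal.ofReal (‖b g‖ ^ 2) ∂m := by rw [setLIntegral_const, mul_comm]
      _ ≤ ∫⁻ x in A, (2 * F (g * x) + 2 * F x) ∂m := by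
          refine lintegral_mono_ae ?_
          filter_upwards [ae_restrict_mem hAm] with x hx using hpt x hx
      _ = 2 * ∫⁻ x in A, F (g * x) ∂m + 2 * ∫⁻ x in A, F x ∂m := by
          rw [lintegral_add_left (hFgm.const_mul 2),
            lintegral_const_mul' 2 _ (by norm_num),
            lintegral_const_mul' 2 _ (by norm_num)]
      _ ≤ 2 * (ε⁻¹ * J) + 2 * (ε⁻¹ * J) := by gcongr
      _ = 4 * ε⁻¹ * J := by ring
  calc ENNReal.ofReal (‖b g‖ ^ 2)
      = (m A)⁻¹ * (m A * ENNReal.ofReal (‖b g‖ ^ 2)) := by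
        rw [← mul_assoc, ENNReal.inv_mul_cancel hmA0 hAfin, one_mul]
    _ ≤ (m A)⁻¹ * (4 * ε⁻¹ * J) := mul_le_mul_right key _
    _ = ((m A)⁻¹ * (4 * ε⁻¹)) * J := by ring

lemma cocycle_point_bound_real {Q : Set G} {m μ : Measure G}
    [m.IsMulLeftInvariant] [m.IsOpenPosMeasure] [SigmaFinite m] [IsFiniteMeasure μ]
    (hac : μ.AbsolutelyContinuous m)
    {ε : ℝ≥0∞} (hε0 : ε ≠ 0) (hεtop : ε ≠ ⊤) (hεle : ∀ x ∈ Q, ε ≤ μ.rnDeriv m x)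
    {A : Set G} (hAo : IsOpen A) (hAne : A.Nonempty) (hAQ : A ⊆ Q) (hAfin : m A ≠ ⊤)
    {g : G} (hgA : g • A ⊆ Q) (hb : IsCocycle π b)
    (hJfin : ∫⁻ x, ENNReal.ofReal (‖b x‖ ^ 2) ∂μ ≠ ⊤) :
    ‖b g‖ ≤ Real.sqrt (((m A)⁻¹ * (4 * ε⁻¹)).toReal) *
      Real.sqrt ((∫⁻ x, ENNReal.ofReal (‖b x‖ ^ 2) ∂μ).toReal) := by
  have hmA0 : m A ≠ 0 := (hAo.measure_pos m hAne).ne'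
  have h := cocycle_point_bound hac hε0 hεtop hεle hAo hAne hAQ hAfin hgA hb
  have hfin : ((m A)⁻¹ * (4 * ε⁻¹)) ≠ ⊤ :=
    ENNReal.mul_ne_top (ENNReal.inv_ne_top.mpr hmA0)
      (ENNReal.mul_ne_top (by norm_num) (ENNReal.inv_ne_top.mpr hε0))
  have h2 : ‖b g‖ ^ 2 ≤ (((m A)⁻¹ * (4 * ε⁻¹)) * ∫⁻ x, ENNReal.ofReal (‖b x‖ ^ 2) ∂μ).toReal := by
    rw [← ENNReal.toReal_ofReal (by positivity : (0:ℝ) ≤ ‖b g‖ ^ 2)]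
    exact ENNReal.toReal_mono (ENNReal.mul_ne_top hfin hJfin) h
  rw [ENNReal.toReal_mul] at h2
  calc ‖b g‖ = Real.sqrt (‖b g‖ ^ 2) := (Real.sqrt_sq (norm_nonneg _)).symm
    _ ≤ Real.sqrt (((m A)⁻¹ * (4 * ε⁻¹)).toReal *
        (∫⁻ x, ENNReal.ofReal (‖b x‖ ^ 2) ∂μ).toReal) := Real.sqrt_le_sqrt h2
    _ = _ := Real.sqrt_mul ENNReal.toReal_nonneg _

lemma integral_sq_eq {μ : Measure G} (hb : IsCocycle π b) :
    ∫ x, ‖b x‖ ^ 2 ∂μ = (∫⁻ x, ENNReal.ofReal (‖b x‖ ^ 2) ∂μ).toReal :=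
  integral_eq_lintegral_of_nonneg_ae (ae_of_all _ fun x => by positivity)
    (hb.1.norm.pow 2).aestronglyMeasurable




lemma exists_V {Q : Set G} {m μ : Measure G} (hconv : Convention Q m μ) :
    ∃ V : Set G, IsOpen V ∧ (1 : G) ∈ V ∧ V ⊆ Q ∧ V⁻¹ = V ∧
      ∀ x : G, ∃ n : ℕ, x ∈ V ^ (n + 1) := by
  obtain ⟨U, hUo, hU1, hUQ, hUgen⟩ := hconv.genNbhd
  refine ⟨U ∪ U⁻¹, hUo.union hUo.inv, Or.inl hU1, ?_, ?_, ?_⟩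
  · rintro x (hx | hx)
    · exact hUQ hx
    · rw [← hconv.qsymm]
      exact Set.mem_inv.mpr (hUQ (Set.mem_inv.mp hx))
  · ext x
    simp only [Set.mem_inv, Set.mem_union, inv_inv]
    tauto
  · exact gen_cover Set.subset_union_left (Or.inl hU1) (by
      ext x; simp only [Set.mem_inv, Set.mem_union, inv_inv]; tauto) hUgen

lemma pow_compact {V : Set G} (hVc : IsCompact (closure V)) (n : ℕ) :
    IsCompact ((closure V) ^ (n + 1)) := by
  induction n with
  | zero => simpa [pow_one] using hVc
  | succ n ih => rw [pow_succ]; exact ih.mul hVc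

lemma sigmaCompact_of {V : Set G} (hVc : IsCompact (closure V))
    (hcov : ∀ x : G, ∃ n : ℕ, x ∈ V ^ (n + 1)) : SigmaCompactSpace G := by
  refine ⟨fun n => (closure V) ^ (n + 1), fun n => pow_compact hVc n, ?_⟩
  ext x
  simp only [Set.mem_iUnion, Set.mem_univ, iff_true]
  obtain ⟨n, hn⟩ := hcov x
  exact ⟨n, Set.pow_subset_pow_left subset_closure hn⟩

variable {π : G →* (H ≃ₗᵢ[ℝ] H)}

lemma Jfin {Q : Set G} {m μ : Measure G} (hconv : Convention Q m μ)
    (hcovQ : ∀ x : G, ∃ n : ℕ, x ∈ Q ^ (n + 1)) {b : G → H} (hb : IsCocycle π b) :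
    ∫⁻ x, ENNReal.ofReal (‖b x‖ ^ 2) ∂μ ≠ ⊤ := by
  refine ((lintegral_sq_le hconv.relCompact hcovQ hb).trans_lt ?_).ne
  exact ENNReal.mul_lt_top ENNReal.ofReal_lt_top (hconv.moments 2)

lemma exists_CV {Q : Set G} {m μ : Measure G} (hconv : Convention Q m μ)
    {V : Set G} (hVo : IsOpen V) (hV1 : (1 : G) ∈ V) (hVQ : V ⊆ Q) (hVs : V⁻¹ = V)
    (hcov : ∀ x : G, ∃ n : ℕ, x ∈ V ^ (n + 1)) :
    ∃ CV : ℝ, 0 ≤ CV ∧ ∀ b : G → H, IsCocycle π b → ∀ v ∈ V,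
      ‖b v‖ ≤ CV * Real.sqrt ((∫⁻ x, ENNReal.ofReal (‖b x‖ ^ 2) ∂μ).toReal) := by
  haveI := hconv.haar
  haveI := hconv.prob
  have hQc := hconv.relCompact
  have hVclc : IsCompact (closure V) :=
    hQc.of_isClosed_subset isClosed_closure (closure_mono hVQ)
  haveI : SigmaCompactSpace G := sigmaCompact_of hVclc hcov
  haveI : SigmaFinite m := inferInstance
  obtain ⟨ε₀, hε₀pos, hε₀le⟩ := hconv.lowerBound
  have hε0 : min ε₀ 1 ≠ 0 := (lt_min hε₀pos zero_lt_one).ne'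
  have hεtop : min ε₀ 1 ≠ ⊤ := ((min_le_right _ _).trans_lt ENNReal.one_lt_top).ne
  have hεle : ∀ x ∈ Q, min ε₀ 1 ≤ μ.rnDeriv m x := fun x hx =>
    (min_le_left _ _).trans (hε₀le x hx)
  have hmfin : ∀ A : Set G, A ⊆ Q → m A ≠ ⊤ := fun A hA =>
    ((measure_mono (hA.trans subset_closure)).trans_lt hQc.measure_lt_top).ne
  obtain ⟨W, hWo, hW1, hWW⟩ := exists_open_nhds_one_mul_subset (hVo.mem_nhds hV1)
  have hW₀o : IsOpen (W ∩ V) := hWo.inter hVo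
  have hW₀1 : (1 : G) ∈ W ∩ V := ⟨hW1, hV1⟩
  have hW₀V : W ∩ V ⊆ V := Set.inter_subset_right
  have hW₀W₀ : (W ∩ V) * (W ∩ V) ⊆ V :=
    (Set.mul_subset_mul Set.inter_subset_left Set.inter_subset_left).trans hWW
  obtain ⟨t, ht⟩ := hVclc.elim_finite_subcover
    (fun h : ↥(closure V) => (h : G) • (W ∩ V))
    (fun h => hW₀o.smul _)
    (fun x hx => Set.mem_iUnion.mpr ⟨⟨x, hx⟩, ⟨1, hW₀1, by simp⟩⟩)
  have hAprop : ∀ h ∈ closure V, IsOpen (V ∩ (h⁻¹ • V)) ∧ (V ∩ (h⁻¹ • V)).Nonempty ∧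
      V ∩ (h⁻¹ • V) ⊆ Q ∧ h • (V ∩ (h⁻¹ • V)) ⊆ Q := by
    intro h hh
    obtain ⟨v₁, hv₁, v₂, hv₂, hveq⟩ := closure_subset_sq hVo hV1 hVs hh
    refine ⟨hVo.inter (hVo.smul _), ⟨v₂⁻¹, ?_, ?_⟩, Set.inter_subset_left.trans hVQ, ?_⟩
    · rw [← hVs]; exact Set.inv_mem_inv.mpr hv₂
    · refine Set.mem_smul_set_iff_inv_smul_mem.mpr ?_
      simp only [inv_inv, smul_eq_mul]
      rw [← hveq]
      simpa using hv₁
    · rintro y ⟨x, ⟨hxV, hxh⟩, rfl⟩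
      have hx2 := Set.mem_smul_set_iff_inv_smul_mem.mp hxh
      simp only [inv_inv, smul_eq_mul] at hx2 ⊢
      exact hVQ hx2
  refine ⟨(∑ h ∈ t, Real.sqrt (((m (V ∩ ((h : G)⁻¹ • V)))⁻¹ * (4 * (min ε₀ 1)⁻¹)).toReal)) +
      Real.sqrt (((m (W ∩ V))⁻¹ * (4 * (min ε₀ 1)⁻¹)).toReal),
    add_nonneg (Finset.sum_nonneg fun h _ => Real.sqrt_nonneg _) (Real.sqrt_nonneg _),
    fun b hb v hv => ?_⟩
  have hJ : ∫⁻ x, ENNReal.ofReal (‖b x‖ ^ 2) ∂μ ≠ ⊤ :=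
    Jfin hconv (fun x => (hcov x).imp fun n hn => Set.pow_subset_pow_left hVQ hn) hb
  obtain ⟨h, hht, hvh⟩ := Set.mem_iUnion₂.mp (ht (subset_closure hv))
  obtain ⟨w, hw, hveq⟩ := hvh
  simp only [smul_eq_mul] at hveq
  have hAh := hAprop (h : G) h.2
  have hbh : ‖b (h : G)‖ ≤ Real.sqrt (((m (V ∩ ((h : G)⁻¹ • V)))⁻¹ * (4 * (min ε₀ 1)⁻¹)).toReal) *
      Real.sqrt ((∫⁻ x, ENNReal.ofReal (‖b x‖ ^ 2) ∂μ).toReal) :=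
    cocycle_point_bound_real hconv.ac hε0 hεtop hεle hAh.1 hAh.2.1 hAh.2.2.1
      (hmfin _ hAh.2.2.1) hAh.2.2.2 hb hJ
  have hbw : ‖b w‖ ≤ Real.sqrt (((m (W ∩ V))⁻¹ * (4 * (min ε₀ 1)⁻¹)).toReal) *
      Real.sqrt ((∫⁻ x, ENNReal.ofReal (‖b x‖ ^ 2) ∂μ).toReal) := by
    refine cocycle_point_bound_real hconv.ac hε0 hεtop hεle hW₀o ⟨1, hW₀1⟩
      (hW₀V.trans hVQ) (hmfin _ (hW₀V.trans hVQ)) ?_ hb hJ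
    rintro y ⟨x, hx, rfl⟩
    simp only [smul_eq_mul]
    exact hVQ (hW₀W₀ (Set.mul_mem_mul hw hx))
  have hsum : Real.sqrt (((m (V ∩ ((h : G)⁻¹ • V)))⁻¹ * (4 * (min ε₀ 1)⁻¹)).toReal) ≤
      ∑ h' ∈ t, Real.sqrt (((m (V ∩ ((h' : G)⁻¹ • V)))⁻¹ * (4 * (min ε₀ 1)⁻¹)).toReal) :=
    Finset.single_le_sum
      (f := fun h' : ↥(closure V) =>
        Real.sqrt (((m (V ∩ ((h' : G)⁻¹ • V)))⁻¹ * (4 * (min ε₀ 1)⁻¹)).toReal))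
      (fun h' _ => Real.sqrt_nonneg _) hht
  have hL0 : 0 ≤ Real.sqrt ((∫⁻ x, ENNReal.ofReal (‖b x‖ ^ 2) ∂μ).toReal) :=
    Real.sqrt_nonneg _
  calc ‖b v‖ = ‖b ((h : G) * w)‖ := by rw [hveq]
    _ ≤ ‖b (h : G)‖ + ‖b w‖ := cocycle_norm_mul hb _ _
    _ ≤ _ := by
        rw [add_mul]
        refine add_le_add (hbh.trans ?_) hbw
        exact mul_le_mul_of_nonneg_right hsum hL0

lemma exists_key {Q : Set G} {m μ : Measure G} (hconv : Convention Q m μ) :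
    ∃ (V : Set G) (CV : ℝ) (N : ℕ), IsOpen V ∧ (1 : G) ∈ V ∧ V ⊆ Q ∧
      (∀ x : G, ∃ n : ℕ, x ∈ V ^ (n + 1)) ∧ 0 ≤ CV ∧ Q ⊆ V ^ (N + 1) ∧
      ∀ b : G → H, IsCocycle π b → ∀ n : ℕ, ∀ g ∈ V ^ (n + 1),
        ‖b g‖ ≤ ((n : ℝ) + 1) * CV * Real.sqrt (∫ x, ‖b x‖ ^ 2 ∂μ) := by
  obtain ⟨V, hVo, hV1, hVQ, hVs, hcov⟩ := exists_V hconv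
  obtain ⟨CV, hCVnn, hCVb⟩ := exists_CV (π := π) hconv hVo hV1 hVQ hVs hcov
  obtain ⟨N, hNQ⟩ := compact_subset_pow hVo hV1 hcov hconv.relCompact
  refine ⟨V, CV, N, hVo, hV1, hVQ, hcov, hCVnn, subset_closure.trans hNQ, ?_⟩
  intro b hb n g hg
  have hIeq : ∫ x, ‖b x‖ ^ 2 ∂μ = (∫⁻ x, ENNReal.ofReal (‖b x‖ ^ 2) ∂μ).toReal :=
    integral_sq_eq hb
  have hbnd := cocycle_pow_bound hb V
    (CV * Real.sqrt ((∫⁻ x, ENNReal.ofReal (‖b x‖ ^ 2) ∂μ).toReal))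
    (hCVb b hb) (n + 1) g hg
  rw [hIeq]
  calc ‖b g‖ ≤ ((n + 1 : ℕ) : ℝ) *
      (CV * Real.sqrt ((∫⁻ x, ENNReal.ofReal (‖b x‖ ^ 2) ∂μ).toReal)) := hbnd
    _ = ((n : ℝ) + 1) * CV * Real.sqrt ((∫⁻ x, ENNReal.ofReal (‖b x‖ ^ 2) ∂μ).toReal) := by
        push_cast; ring


lemma part3 {Q : Set G} {m μ : Measure G} (hconv : Convention Q m μ) [CompleteSpace H]
    {V : Set G} {CV : ℝ} (hVo : IsOpen V)
    (hcov : ∀ x : G, ∃ n : ℕ, x ∈ V ^ (n + 1)) (hVQ : V ⊆ Q) (hCVnn : 0 ≤ CV)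
    (key : ∀ b : G → H, IsCocycle π b → ∀ n : ℕ, ∀ g ∈ V ^ (n + 1),
      ‖b g‖ ≤ ((n : ℝ) + 1) * CV * Real.sqrt (∫ x, ‖b x‖ ^ 2 ∂μ))
    (bseq : ℕ → G → H) (hcoc : ∀ k, IsCocycle π (bseq k))
    (hcau : ∀ ε : ℝ, 0 < ε → ∃ N : ℕ, ∀ p q : ℕ, N ≤ p → N ≤ q →
      ∫ x, ‖bseq p x - bseq q x‖ ^ 2 ∂μ < ε) :
    ∃ blim : G → H, IsCocycle π blim ∧
      Filter.Tendsto (fun k : ℕ => ∫ x, ‖bseq k x - blim x‖ ^ 2 ∂μ) Filter.atTop (𝓝 0) := by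
  have hcovQ : ∀ x : G, ∃ n : ℕ, x ∈ Q ^ (n + 1) := fun x =>
    (hcov x).imp fun n hn => Set.pow_subset_pow_left hVQ hn
  have hdcoc : ∀ p q : ℕ, IsCocycle π (fun x => bseq p x - bseq q x) :=
    fun p q => cocycle_sub (hcoc p) (hcoc q)
  have hdiff : ∀ (n : ℕ) (εr : ℝ), 0 < εr → ∃ N : ℕ, ∀ p q, N ≤ p → N ≤ q →
      ∀ x ∈ V ^ (n + 1), ‖bseq p x - bseq q x‖ ≤ εr := by
    intro n εr hεr
    have ha0 : 0 ≤ ((n : ℝ) + 1) * CV := mul_nonneg (by positivity) hCVnn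
    obtain ⟨N, hN⟩ := hcau ((εr / (((n : ℝ) + 1) * CV + 1)) ^ 2)
      (by positivity)
    refine ⟨N, fun p q hp hq x hx => ?_⟩
    have h1 := key _ (hdcoc p q) n x hx
    have hδ0 : 0 < εr / (((n : ℝ) + 1) * CV + 1) := div_pos hεr (by linarith)
    have h2 : Real.sqrt (∫ x, ‖bseq p x - bseq q x‖ ^ 2 ∂μ) ≤
        εr / (((n : ℝ) + 1) * CV + 1) := by
      calc Real.sqrt (∫ x, ‖bseq p x - bseq q x‖ ^ 2 ∂μ)
          ≤ Real.sqrt ((εr / (((n : ℝ) + 1) * CV + 1)) ^ 2) :=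
            Real.sqrt_le_sqrt (hN p q hp hq).le
        _ = εr / (((n : ℝ) + 1) * CV + 1) := Real.sqrt_sq hδ0.le
    have hfrac : (((n : ℝ) + 1) * CV) / (((n : ℝ) + 1) * CV + 1) ≤ 1 :=
      (div_le_one (by linarith)).mpr (by linarith)
    calc ‖bseq p x - bseq q x‖
        ≤ ((n : ℝ) + 1) * CV * Real.sqrt (∫ x, ‖bseq p x - bseq q x‖ ^ 2 ∂μ) := h1
      _ ≤ ((n : ℝ) + 1) * CV * (εr / (((n : ℝ) + 1) * CV + 1)) :=
          mul_le_mul_of_nonneg_left h2 ha0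
      _ = ((((n : ℝ) + 1) * CV) / (((n : ℝ) + 1) * CV + 1)) * εr := by ring
      _ ≤ 1 * εr := mul_le_mul_of_nonneg_right hfrac hεr.le
      _ = εr := one_mul _
  have hpt : ∀ g : G, ∃ l : H, Tendsto (fun k => bseq k g) atTop (𝓝 l) := by
    intro g
    obtain ⟨n, hn⟩ := hcov g
    refine cauchySeq_tendsto_of_complete (Metric.cauchySeq_iff.mpr fun εr hεr => ?_)
    obtain ⟨N, hN⟩ := hdiff n (εr / 2) (by linarith)
    exact ⟨N, fun p hp q hq => by
      rw [dist_eq_norm]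
      exact (hN p q hp hq g hn).trans_lt (by linarith)⟩
  have htend : ∀ g, Tendsto (fun k => bseq k g) atTop (𝓝 ((hpt g).choose)) :=
    fun g => (hpt g).choose_spec
  have htail : ∀ (n : ℕ) (εr : ℝ), 0 < εr → ∃ N : ℕ, ∀ p, N ≤ p →
      ∀ x ∈ V ^ (n + 1), ‖bseq p x - (hpt x).choose‖ ≤ εr := by
    intro n εr hεr
    obtain ⟨N, hN⟩ := hdiff n εr hεr
    refine ⟨N, fun p hp x hx => ?_⟩
    have hlim : Tendsto (fun q => ‖bseq p x - bseq q x‖) atTop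
        (𝓝 ‖bseq p x - (hpt x).choose‖) := (tendsto_const_nhds.sub (htend x)).norm
    refine le_of_tendsto hlim ?_
    filter_upwards [eventually_ge_atTop N] with q hq
    exact hN p q hp hq x hx
  have hblimcoc : IsCocycle π (fun g => (hpt g).choose) := by
    constructor
    · rw [continuous_iff_continuousAt]
      intro g₀
      obtain ⟨n, hn⟩ := hcov g₀
      have huc : TendstoUniformlyOn (fun k x => bseq k x) (fun g => (hpt g).choose)
          atTop (V ^ (n + 1)) := by
        rw [Metric.tendstoUniformlyOn_iff]
        intro εr hεr
        obtain ⟨N, hN⟩ := htail n (εr / 2) (by linarith)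
        filter_upwards [eventually_ge_atTop N] with k hk
        intro x hx
        rw [dist_comm, dist_eq_norm]
        exact (hN k hk x hx).trans_lt (by linarith)
      have hco : ContinuousOn (fun g => (hpt g).choose) (V ^ (n + 1)) :=
        huc.continuousOn (Eventually.of_forall fun k => (hcoc k).1.continuousOn).frequently
      exact hco.continuousAt ((pow_open hVo n).mem_nhds hn)
    · intro g x
      refine tendsto_nhds_unique (htend (g * x)) ?_
      have heq : (fun k => bseq k (g * x)) = fun k => bseq k g + π g (bseq k x) := by
        funext k; exact (hcoc k).2 g x
      rw [heq]
      exact (htend g).add (((π g).continuous.tendsto _).comp (htend x))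
  refine ⟨fun g => (hpt g).choose, hblimcoc, ?_⟩
  rw [Metric.tendsto_atTop]
  intro εr hεr
  obtain ⟨N, hN⟩ := hcau (εr / 2) (by linarith)
  refine ⟨N, fun k hk => ?_⟩
  have hkcoc : IsCocycle π (fun x => bseq k x - (hpt x).choose) :=
    cocycle_sub (hcoc k) hblimcoc
  have hnn : 0 ≤ ∫ x, ‖bseq k x - (hpt x).choose‖ ^ 2 ∂μ :=
    integral_nonneg fun x => by positivity
  have hbound : ∫ x, ‖bseq k x - (hpt x).choose‖ ^ 2 ∂μ ≤ εr / 2 := by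
    have hfatou : ∫⁻ x, ENNReal.ofReal (‖bseq k x - (hpt x).choose‖ ^ 2) ∂μ ≤
        ENNReal.ofReal (εr / 2) := by
      have hptlim : ∀ x : G, ENNReal.ofReal (‖bseq k x - (hpt x).choose‖ ^ 2) =
          liminf (fun q => ENNReal.ofReal (‖bseq k x - bseq q x‖ ^ 2)) atTop := by
        intro x
        refine (Tendsto.liminf_eq ?_).symm
        exact ENNReal.tendsto_ofReal
          (((tendsto_const_nhds.sub (htend x)).norm).pow 2)
      calc ∫⁻ x, ENNReal.ofReal (‖bseq k x - (hpt x).choose‖ ^ 2) ∂μ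
          = ∫⁻ x, liminf (fun q => ENNReal.ofReal (‖bseq k x - bseq q x‖ ^ 2)) atTop ∂μ := by
            simp only [hptlim]
        _ ≤ liminf (fun q => ∫⁻ x, ENNReal.ofReal (‖bseq k x - bseq q x‖ ^ 2) ∂μ) atTop :=
            lintegral_liminf_le fun q =>
              (((hdcoc k q).1.norm.measurable.pow_const 2).ennreal_ofReal)
        _ ≤ liminf (fun _ : ℕ => ENNReal.ofReal (εr / 2)) atTop := by
            refine liminf_le_liminf ?_
            filter_upwards [eventually_ge_atTop N] with q hq
            have heq2 : ∫⁻ x, ENNReal.ofReal (‖bseq k x - bseq q x‖ ^ 2) ∂μ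
                = ENNReal.ofReal (∫ x, ‖bseq k x - bseq q x‖ ^ 2 ∂μ) := by
              rw [integral_sq_eq (hdcoc k q),
                ENNReal.ofReal_toReal (Jfin hconv hcovQ (hdcoc k q))]
            rw [heq2]
            exact ENNReal.ofReal_le_ofReal (hN k q hk hq).le
        _ = ENNReal.ofReal (εr / 2) := liminf_const _
    have h3 := ENNReal.toReal_mono ENNReal.ofReal_ne_top hfatou
    rw [ENNReal.toReal_ofReal (by linarith)] at h3
    rw [integral_sq_eq hkcoc]
    exact h3
  rw [dist_zero_right, Real.norm_eq_abs, abs_of_nonneg hnn]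
  linarith

lemma part4 {Q : Set G} {m μ : Measure G} (hconv : Convention Q m μ)
    {V : Set G} {CV : ℝ} {N : ℕ} (h1Q : (1 : G) ∈ Q)
    (hcovQ : ∀ x : G, ∃ n : ℕ, x ∈ Q ^ (n + 1)) (hCVnn : 0 ≤ CV)
    (hQsub : Q ⊆ V ^ (N + 1))
    (key : ∀ b : G → H, IsCocycle π b → ∀ n : ℕ, ∀ g ∈ V ^ (n + 1),
      ‖b g‖ ≤ ((n : ℝ) + 1) * CV * Real.sqrt (∫ x, ‖b x‖ ^ 2 ∂μ)) :
    ∃ c₁ c₂ : ℝ, 0 < c₁ ∧ c₁ ≤ c₂ ∧ ∀ b : G → H, IsCocycle π b →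
      c₁ * (⨆ g : Q, ‖b (g : G)‖) ≤ Real.sqrt (∫ x, ‖b x‖ ^ 2 ∂μ) ∧
      Real.sqrt (∫ x, ‖b x‖ ^ 2 ∂μ) ≤ c₂ * (⨆ g : Q, ‖b (g : G)‖) := by
  have hQc := hconv.relCompact
  have hd0 : 0 ≤ ((N : ℝ) + 1) * CV := mul_nonneg (by positivity) hCVnn
  have hc₁pos : 0 < (((N : ℝ) + 1) * CV + 1)⁻¹ := inv_pos.mpr (by linarith)
  refine ⟨(((N : ℝ) + 1) * CV + 1)⁻¹,
    max ((((N : ℝ) + 1) * CV + 1)⁻¹)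
      (Real.sqrt ((∫⁻ x, (wordLength Q x : ℝ≥0∞) ^ 2 ∂μ).toReal)),
    hc₁pos, le_max_left _ _, fun b hb => ?_⟩
  have hL0 : 0 ≤ Real.sqrt (∫ x, ‖b x‖ ^ 2 ∂μ) := Real.sqrt_nonneg _
  have hSnn : 0 ≤ ⨆ g : Q, ‖b (g : G)‖ := sup_nonneg hQc h1Q hb
  have hSble : (⨆ g : Q, ‖b (g : G)‖) ≤
      ((N : ℝ) + 1) * CV * Real.sqrt (∫ x, ‖b x‖ ^ 2 ∂μ) :=
    Real.iSup_le (fun g => key b hb N (g : G) (hQsub g.2)) (mul_nonneg hd0 hL0)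
  constructor
  · have h1 : (((N : ℝ) + 1) * CV + 1)⁻¹ * (⨆ g : Q, ‖b (g : G)‖) ≤
        (((N : ℝ) + 1) * CV + 1)⁻¹ *
          (((N : ℝ) + 1) * CV * Real.sqrt (∫ x, ‖b x‖ ^ 2 ∂μ)) :=
      mul_le_mul_of_nonneg_left hSble hc₁pos.le
    refine h1.trans ?_
    have hfrac : (((N : ℝ) + 1) * CV) / (((N : ℝ) + 1) * CV + 1) ≤ 1 :=
      (div_le_one (by linarith)).mpr (by linarith)
    calc (((N : ℝ) + 1) * CV + 1)⁻¹ *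
          (((N : ℝ) + 1) * CV * Real.sqrt (∫ x, ‖b x‖ ^ 2 ∂μ))
        = ((((N : ℝ) + 1) * CV) / (((N : ℝ) + 1) * CV + 1)) *
            Real.sqrt (∫ x, ‖b x‖ ^ 2 ∂μ) := by ring
      _ ≤ 1 * Real.sqrt (∫ x, ‖b x‖ ^ 2 ∂μ) := mul_le_mul_of_nonneg_right hfrac hL0
      _ = Real.sqrt (∫ x, ‖b x‖ ^ 2 ∂μ) := one_mul _
  · have hlin : (∫⁻ x, ENNReal.ofReal (‖b x‖ ^ 2) ∂μ).toReal ≤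
        (⨆ g : Q, ‖b (g : G)‖) ^ 2 * (∫⁻ x, (wordLength Q x : ℝ≥0∞) ^ 2 ∂μ).toReal := by
      have h := lintegral_sq_le (μ := μ) hQc hcovQ hb
      have h2 := ENNReal.toReal_mono
        (ENNReal.mul_ne_top ENNReal.ofReal_ne_top (hconv.moments 2).ne) h
      rwa [ENNReal.toReal_mul, ENNReal.toReal_ofReal (sq_nonneg _)] at h2
    calc Real.sqrt (∫ x, ‖b x‖ ^ 2 ∂μ)
        = Real.sqrt ((∫⁻ x, ENNReal.ofReal (‖b x‖ ^ 2) ∂μ).toReal) := by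
          rw [integral_sq_eq hb]
      _ ≤ Real.sqrt ((⨆ g : Q, ‖b (g : G)‖) ^ 2 *
            (∫⁻ x, (wordLength Q x : ℝ≥0∞) ^ 2 ∂μ).toReal) := Real.sqrt_le_sqrt hlin
      _ = (⨆ g : Q, ‖b (g : G)‖) *
            Real.sqrt ((∫⁻ x, (wordLength Q x : ℝ≥0∞) ^ 2 ∂μ).toReal) := by
          rw [Real.sqrt_mul (sq_nonneg _), Real.sqrt_sq hSnn]
      _ = Real.sqrt ((∫⁻ x, (wordLength Q x : ℝ≥0∞) ^ 2 ∂μ).toReal) *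
            (⨆ g : Q, ‖b (g : G)‖) := mul_comm _ _
      _ ≤ _ := mul_le_mul_of_nonneg_right (le_max_right _ _) hSnn


end Stmt4Aux

open Stmt4Aux

/-- The space `Z¹(G,π)` of `1`-cocycles is a real vector space, complete for
the Hilbert norm `‖·‖_{L²(μ)}`, and this norm is equivalent to `‖·‖_Q`. -/
theorem stmt_4 (Q : Set G) (m μ : MeasureTheory.Measure G) (hconv : Convention Q m μ)
    [CompleteSpace H]
    (π : G →* (H ≃ₗᵢ[ℝ] H)) (hπ : ∀ v : H, Continuous fun g : G => π g v) :
    (∀ b₁ b₂ : G → H, IsCocycle π b₁ → IsCocycle π b₂ →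
        IsCocycle π (fun g => b₁ g + b₂ g)) ∧
    (∀ (r : ℝ) (b : G → H), IsCocycle π b → IsCocycle π (fun g => r • b g)) ∧
    (∀ bseq : ℕ → G → H, (∀ k, IsCocycle π (bseq k)) →
      (∀ ε : ℝ, 0 < ε → ∃ N : ℕ, ∀ p q : ℕ, N ≤ p → N ≤ q →
          ∫ x, ‖bseq p x - bseq q x‖ ^ 2 ∂μ < ε) →
      ∃ blim : G → H, IsCocycle π blim ∧
        Filter.Tendsto (fun k : ℕ => ∫ x, ‖bseq k x - blim x‖ ^ 2 ∂μ) Filter.atTop (𝓝 0)) ∧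
    (∃ c₁ c₂ : ℝ, 0 < c₁ ∧ c₁ ≤ c₂ ∧ ∀ b : G → H, IsCocycle π b →
      c₁ * (⨆ g : Q, ‖b (g : G)‖) ≤ Real.sqrt (∫ x, ‖b x‖ ^ 2 ∂μ) ∧
      Real.sqrt (∫ x, ‖b x‖ ^ 2 ∂μ) ≤ c₂ * (⨆ g : Q, ‖b (g : G)‖)) := by
  obtain ⟨V, CV, N, hVo, hV1, hVQ, hcov, hCVnn, hQsub, key⟩ := exists_key (π := π) hconv
  have hcovQ : ∀ x : G, ∃ n : ℕ, x ∈ Q ^ (n + 1) := fun x =>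
    (hcov x).imp fun n hn => Set.pow_subset_pow_left hVQ hn
  exact ⟨fun b₁ b₂ h₁ h₂ => cocycle_add h₁ h₂,
    fun r b h => cocycle_smul r h,
    fun bseq hcoc hcau => part3 hconv hVo hcov hVQ hCVnn key bseq hcoc hcau,
    part4 hconv (hVQ hV1) hcovQ hCVnn hQsub key⟩


end
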